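/- Let π = a + b·i ∈ ℤ[i] with 0 < a < b, gcd(a,b) = 1, and p = a² + b² a prime with p ≡ 1 (mod 4), and let 𝔽 = ℤ[i]/(π). Then for all positive integers n ≥ k ≥ 1, d_π(n, k) ≤ d_π(d_H(n, k), 1). -/

import Mathlib

open scoped Classical

noncomputable section

/-- The quotient ring `ℤ[i]/(π)`. -/
abbrev GQuot (pi : GaussianInt) : Type := GaussianInt ⧸ Ideal.span {pi}

/-- The quotient map `ℤ[i] → ℤ[i]/(π)`. -/
def gmk (pi : GaussianInt) : GaussianInt →+* GQuot pi := Ideal.Quotient.mk (Ideal.span {pi})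

/-- Mannheim weight of an element of `ℤ[i]/(π)`:
the minimum of `|x| + |y|` over representatives `x + y·i`. -/
def mWt (pi : GaussianInt) (α : GQuot pi) : ℕ :=
  sInf { w : ℕ | ∃ z : GaussianInt, gmk pi z = α ∧ z.re.natAbs + z.im.natAbs = w }

/-- Mannheim weight of a vector: the sum of the Mannheim weights of its coordinates. -/
def mWtVec (pi : GaussianInt) {n : ℕ} (v : Fin n → GQuot pi) : ℕ := ∑ i, mWt pi (v i)

/-- Hamming weight of a vector: the number of nonzero coordinates. -/
def hWtVec {n : ℕ} {F : Type*} [Zero F] (v : Fin n → F) : ℕ :=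
  Set.ncard { i : Fin n | v i ≠ 0 }

/-- Minimum Mannheim distance of a linear code (minimum Mannheim weight of a
nonzero codeword). -/
def dPiCode (pi : GaussianInt) {n : ℕ} (C : Submodule (GQuot pi) (Fin n → GQuot pi)) : ℕ :=
  sInf { w : ℕ | ∃ c ∈ C, c ≠ 0 ∧ mWtVec pi c = w }

/-- Minimum Hamming distance of a linear code. -/
def dHCode (pi : GaussianInt) {n : ℕ} (C : Submodule (GQuot pi) (Fin n → GQuot pi)) : ℕ :=
  sInf { w : ℕ | ∃ c ∈ C, c ≠ 0 ∧ hWtVec c = w }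

/-- `dPiMax pi n k`: the maximum minimum Mannheim distance over all `[n,k]` codes. -/
def dPiMax (pi : GaussianInt) (n k : ℕ) : ℕ :=
  sSup { d : ℕ | ∃ C : Submodule (GQuot pi) (Fin n → GQuot pi),
    Module.finrank (GQuot pi) C = k ∧ dPiCode pi C = d }

/-- `dHMax pi n k`: the maximum minimum Hamming distance over all `[n,k]` codes. -/
def dHMax (pi : GaussianInt) (n k : ℕ) : ℕ :=
  sSup { d : ℕ | ∃ C : Submodule (GQuot pi) (Fin n → GQuot pi),
    Module.finrank (GQuot pi) C = k ∧ dHCode pi C = d }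

/- ---------- auxiliary lemmas ---------- -/

lemma gmk_pi_eq_zero (pi : GaussianInt) : gmk pi pi = 0 :=
  Ideal.Quotient.eq_zero_iff_mem.mpr (Ideal.mem_span_singleton_self pi)

lemma mWt_zero (pi : GaussianInt) : mWt pi 0 = 0 := by
  have h0 : (0 : ℕ) ∈ { w : ℕ | ∃ z : GaussianInt,
      gmk pi z = (0 : GQuot pi) ∧ z.re.natAbs + z.im.natAbs = w } :=
    ⟨0, by simp [gmk], by simp⟩
  exact Nat.sInf_eq_zero.mpr (Or.inl h0)

lemma mWt_le_bound (pi : GaussianInt) (hpi : pi ≠ 0) (α : GQuot pi) :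
    mWt pi α ≤ pi.norm.natAbs := by
  obtain ⟨z, hz⟩ := Ideal.Quotient.mk_surjective (I := Ideal.span {pi}) α
  have hmk : gmk pi (z % pi) = α := by
    rw [EuclideanDomain.mod_eq_sub_mul_div]
    rw [← hz]
    show gmk pi (z - pi * (z / pi)) = gmk pi z
    rw [map_sub, map_mul, gmk_pi_eq_zero, zero_mul, sub_zero]
  have h1 : mWt pi α ≤ (z % pi).re.natAbs + (z % pi).im.natAbs :=
    Nat.sInf_le ⟨z % pi, hmk, rfl⟩
  have h2 : (z % pi).norm.natAbs =
      (z % pi).re.natAbs * (z % pi).re.natAbs + (z % pi).im.natAbs * (z % pi).im.natAbs :=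
    GaussianInt.natAbs_norm_eq _
  have h3 : (z % pi).norm.natAbs < pi.norm.natAbs := GaussianInt.natAbs_norm_mod_lt z hpi
  have hx : ∀ x : ℕ, x ≤ x * x := by
    intro x
    cases x with
    | zero => simp
    | succ y => exact Nat.le_mul_of_pos_left _ (Nat.succ_pos y)
  have := hx (z % pi).re.natAbs
  have := hx (z % pi).im.natAbs
  omega

lemma mWtVec_le_bound (pi : GaussianInt) (hpi : pi ≠ 0) {N : ℕ} (v : Fin N → GQuot pi) :
    mWtVec pi v ≤ N * pi.norm.natAbs := by
  calc mWtVec pi v ≤ ∑ _i : Fin N, pi.norm.natAbs :=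
        Finset.sum_le_sum fun i _ => mWt_le_bound pi hpi (v i)
    _ = N * pi.norm.natAbs := by simp [Finset.sum_const, mul_comm]

lemma hWtVec_le {N : ℕ} {F : Type*} [Zero F] (v : Fin N → F) : hWtVec v ≤ N := by
  have := Set.ncard_le_ncard (Set.subset_univ {i : Fin N | v i ≠ 0}) Set.finite_univ
  simpa [hWtVec, Set.ncard_univ] using this

lemma dPiCode_le_bound (pi : GaussianInt) (hpi : pi ≠ 0) {N : ℕ}
    (C : Submodule (GQuot pi) (Fin N → GQuot pi)) :
    dPiCode pi C ≤ N * pi.norm.natAbs := by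
  by_cases h : { w : ℕ | ∃ c ∈ C, c ≠ 0 ∧ mWtVec pi c = w }.Nonempty
  · obtain ⟨w, c, _, _, rfl⟩ := h
    exact le_trans (Nat.sInf_le ⟨c, ‹_›, ‹_›, rfl⟩) (mWtVec_le_bound pi hpi c)
  · rw [Set.not_nonempty_iff_eq_empty] at h
    simp [dPiCode, h]

lemma dHCode_le_bound (pi : GaussianInt) {N : ℕ}
    (C : Submodule (GQuot pi) (Fin N → GQuot pi)) :
    dHCode pi C ≤ N := by
  by_cases h : { w : ℕ | ∃ c ∈ C, c ≠ 0 ∧ hWtVec c = w }.Nonempty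
  · obtain ⟨w, c, _, _, rfl⟩ := h
    exact le_trans (Nat.sInf_le ⟨c, ‹_›, ‹_›, rfl⟩) (hWtVec_le c)
  · rw [Set.not_nonempty_iff_eq_empty] at h
    simp [dHCode, h]

set_option maxHeartbeats 2000000 in
/-- `d_π(n,k) ≤ d_π(d_H(n,k), 1)`. -/
theorem stmt4 (a b : ℕ) (ha : 0 < a) (hab : a < b) (hgcd : Nat.gcd a b = 1)
    (hp : Nat.Prime (a ^ 2 + b ^ 2)) (hmod : (a ^ 2 + b ^ 2) % 4 = 1)
    (pi : GaussianInt) (hpi : pi = (⟨(a : ℤ), (b : ℤ)⟩ : GaussianInt))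
    (n k : ℕ) (hk : 1 ≤ k) (hn : k ≤ n) :
    dPiMax pi n k ≤ dPiMax pi (dHMax pi n k) 1 := by
  -- basic facts about pi
  have hpine : pi ≠ 0 := by
    rw [hpi]
    intro h
    rw [Zsqrtd.ext_iff] at h
    simp at h
    omega
  have hnorm : pi.norm.natAbs = a ^ 2 + b ^ 2 := by
    have : pi.norm = ((a ^ 2 + b ^ 2 : ℕ) : ℤ) := by
      rw [hpi, Zsqrtd.norm_def]
      push_cast
      ring
    rw [this, Int.natAbs_natCast]
  have hirr : Irreducible pi := by
    constructor
    · intro hu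
      have h1 : pi.norm.natAbs = 1 := Zsqrtd.norm_eq_one_iff.mpr hu
      rw [hnorm] at h1
      exact Nat.Prime.one_lt hp |>.ne' h1
    · intro x y hxy
      have hmul : x.norm.natAbs * y.norm.natAbs = a ^ 2 + b ^ 2 := by
        rw [← Int.natAbs_mul, ← Zsqrtd.norm_mul, ← hxy, hnorm]
      rcases (Nat.prime_mul_iff.mp (hmul ▸ hp)) with ⟨_, h1⟩ | ⟨_, h1⟩
      · right; exact Zsqrtd.norm_eq_one_iff.mp h1
      · left; exact Zsqrtd.norm_eq_one_iff.mp h1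
  haveI hmax : (Ideal.span {pi}).IsMaximal :=
    PrincipalIdealRing.isMaximal_of_irreducible hirr
  letI : Field (GQuot pi) := Ideal.Quotient.field _
  set m := dHMax pi n k with hm
  -- main reduction
  apply csSup_le'
  rintro d ⟨C, hCrank, rfl⟩
  -- C is nonzero
  have hCne : C ≠ ⊥ := by
    intro h
    rw [h, finrank_bot] at hCrank
    omega
  obtain ⟨c0, hc0C, hc0ne⟩ := Submodule.ne_bot_iff C |>.mp hCne
  -- choose a minimum Hamming weight codeword c
  have hHne : { w : ℕ | ∃ c ∈ C, c ≠ 0 ∧ hWtVec c = w }.Nonempty :=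
    ⟨hWtVec c0, c0, hc0C, hc0ne, rfl⟩
  obtain ⟨c, hcC, hcne, hchw⟩ := Nat.sInf_mem hHne
  have hdH : dHCode pi C ≤ m := by
    apply le_csSup
    · exact ⟨n, fun w ⟨C', _, hw⟩ => hw ▸ dHCode_le_bound pi C'⟩
    · exact ⟨C, hCrank, rfl⟩
  have hcm : hWtVec c ≤ m := le_trans (le_of_eq hchw) hdH
  -- support of c as a Finset
  set s : Finset (Fin n) := Finset.univ.filter (fun i => c i ≠ 0) with hs
  have hscard : s.card = hWtVec c := by
    have hset : {i : Fin n | c i ≠ 0} = (↑s : Set (Fin n)) := by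
      ext i; simp [hs]
    rw [hWtVec, hset, Set.ncard_coe_finset]
  have hsm : s.card ≤ m := hscard ▸ hcm
  -- embed the support into Fin m
  obtain ⟨ι⟩ : Nonempty ({i // i ∈ s} ↪ Fin m) := by
    apply Function.Embedding.nonempty_of_card_le
    simpa [Fintype.card_coe] using hsm
  -- the padded vector d of length m
  set d : Fin m → GQuot pi :=
    fun j => if hj : ∃ i : {i // i ∈ s}, ι i = j then c (Classical.choose hj : {i // i ∈ s}) else 0
    with hd
  have hdι : ∀ i : {i // i ∈ s}, d (ι i) = c i := by
    intro i
    have hj : ∃ i' : {i // i ∈ s}, ι i' = ι i := ⟨i, rfl⟩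
    rw [hd]
    simp only
    rw [dif_pos hj]
    have : Classical.choose hj = i := ι.injective (Classical.choose_spec hj)
    rw [this]
  -- the key weight identity
  have hkey : ∀ lam : GQuot pi, mWtVec pi (lam • d) = mWtVec pi (lam • c) := by
    intro lam
    have h1 : mWtVec pi (lam • d)
        = ∑ j ∈ Finset.univ.image (fun i : {i // i ∈ s} => ι i), mWt pi (lam * d j) := by
      rw [mWtVec]
      have e1 : ∀ j : Fin m, mWt pi ((lam • d) j) = mWt pi (lam * d j) := fun j => by
        rw [Pi.smul_apply, smul_eq_mul]
      simp_rw [e1]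
      symm
      apply Finset.sum_subset (Finset.subset_univ _)
      intro j _ hj
      have hj' : ¬ ∃ i : {i // i ∈ s}, ι i = j := by
        intro ⟨i, hi⟩
        exact hj (Finset.mem_image.mpr ⟨i, Finset.mem_univ _, hi⟩)
      have hdj : d j = 0 := by rw [hd]; simp only; rw [dif_neg hj']
      rw [hdj, mul_zero, mWt_zero]
    have h2 : ∑ j ∈ Finset.univ.image (fun i : {i // i ∈ s} => ι i), mWt pi (lam * d j)
        = ∑ i : {i // i ∈ s}, mWt pi (lam * c i) := by
      rw [Finset.sum_image (fun x _ y _ h => ι.injective h)]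
      apply Finset.sum_congr rfl
      intro i _
      rw [hdι i]
    have h3 : ∑ i : {i // i ∈ s}, mWt pi (lam * c i) = ∑ i ∈ s, mWt pi (lam * c i) :=
      Finset.sum_coe_sort s (fun i => mWt pi (lam * c i))
    have h4 : ∑ i ∈ s, mWt pi (lam * c i) = mWtVec pi (lam • c) := by
      rw [mWtVec]
      have e1 : ∀ i : Fin n, mWt pi ((lam • c) i) = mWt pi (lam * c i) := fun i => by
        rw [Pi.smul_apply, smul_eq_mul]
      simp_rw [e1]
      apply Finset.sum_subset (Finset.subset_univ s)
      intro i _ hi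
      have hci : c i = 0 := by
        by_contra hne
        exact hi (by simp [hs, hne])
      rw [hci, mul_zero, mWt_zero]
    rw [h1, h2, h3, h4]
  -- d is nonzero
  have hdne : d ≠ 0 := by
    obtain ⟨i0, hi0⟩ : ∃ i, c i ≠ 0 := by
      by_contra hall
      push_neg at hall
      exact hcne (funext hall)
    have hi0s : i0 ∈ s := by simp [hs, hi0]
    intro h0
    have := hdι ⟨i0, hi0s⟩
    rw [h0] at this
    exact hi0 (by simpa using this.symm)
  -- the singleton code
  set D : Submodule (GQuot pi) (Fin m → GQuot pi) := Submodule.span (GQuot pi) {d} with hD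
  have hDrank : Module.finrank (GQuot pi) D = 1 := finrank_span_singleton hdne
  have hCD : dPiCode pi C ≤ dPiCode pi D := by
    have hDne : { w : ℕ | ∃ x ∈ D, x ≠ 0 ∧ mWtVec pi x = w }.Nonempty :=
      ⟨mWtVec pi d, d, Submodule.mem_span_singleton_self d, hdne, rfl⟩
    obtain ⟨x, hxD, hxne, hxw⟩ := Nat.sInf_mem hDne
    obtain ⟨lam, rfl⟩ := Submodule.mem_span_singleton.mp hxD
    have hlam : lam ≠ 0 := by rintro rfl; simp at hxne
    have hlc : lam • c ∈ C := Submodule.smul_mem C lam hcC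
    have hlcne : lam • c ≠ 0 := smul_ne_zero hlam hcne
    calc dPiCode pi C ≤ mWtVec pi (lam • c) := Nat.sInf_le ⟨lam • c, hlc, hlcne, rfl⟩
      _ = mWtVec pi (lam • d) := (hkey lam).symm
      _ = dPiCode pi D := hxw
  have hDmax : dPiCode pi D ≤ dPiMax pi m 1 := by
    apply le_csSup
    · exact ⟨m * pi.norm.natAbs, fun w ⟨C', _, hw⟩ => hw ▸ dPiCode_le_bound pi hpine C'⟩
    · exact ⟨D, hDrank, rfl⟩
  exact le_trans hCD hDmax
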